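/- Let X be multivariate normal on R^n with mean x0 and covariance Σ, and let gL(x) = A^L x + d^L, gU(x) = A^U x + d^U be affine functions with gL ≤ g ≤ gU pointwise for a measurable g : R^n → R. Define μ_L = A^L x0 + d^L, σ_L² = A^L Σ (A^L)ᵀ, μ_U = A^U x0 + d^U, σ_U² = A^U Σ (A^U)ᵀ, and assume σ_L, σ_U > 0. Then for any a ∈ R, 1/2 − (1/2) erf((a − μ_L)/(σ_L√2)) ≤ P[g(X) > a] ≤ 1/2 − (1/2) erf((a − μ_U)/(σ_U√2)). -/

import Mathlib

open MeasureTheory ProbabilityTheory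

/-- The Gauss error function. -/
noncomputable def erf (x : ℝ) : ℝ := (2 / Real.sqrt Real.pi) * ∫ t in (0:ℝ)..x, Real.exp (-t ^ 2)

section Aux
open Set Real


lemma exp_int (z : ℝ) : ∫ t in Ioi z, Real.exp (-t ^ 2)
    = Real.sqrt Real.pi / 2 - ∫ t in (0:ℝ)..z, Real.exp (-t ^ 2) := by
  have hint : Integrable (fun t : ℝ => Real.exp (-t ^ 2)) := by
    simpa using integrable_exp_neg_mul_sq (b := 1) one_pos
  have h1 : (∫ t in Iic z, Real.exp (-t ^ 2)) + ∫ t in Ioi z, Real.exp (-t ^ 2)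
      = ∫ t : ℝ, Real.exp (-t ^ 2) := intervalIntegral.integral_Iic_add_Ioi hint.integrableOn hint.integrableOn
  have htot : ∫ t : ℝ, Real.exp (-t ^ 2) = Real.sqrt Real.pi := by
    simpa using integral_gaussian 1
  have hIic0 : (∫ t in Iic (0:ℝ), Real.exp (-t ^ 2)) = Real.sqrt Real.pi / 2 := by
    have h := integral_comp_neg_Iic (0:ℝ) (fun t => Real.exp (-t ^ 2))
    simp only [neg_zero, neg_sq] at h
    rw [h]
    simpa using integral_gaussian_Ioi 1
  have h2 : (∫ t in Iic z, Real.exp (-t ^ 2)) - ∫ t in Iic (0:ℝ), Real.exp (-t ^ 2)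
      = ∫ t in (0:ℝ)..z, Real.exp (-t ^ 2) :=
    intervalIntegral.integral_Iic_sub_Iic hint.integrableOn hint.integrableOn
  linarith

lemma shift_Ioi (f : ℝ → ℝ) (a d : ℝ) : ∫ x in Ioi a, f (x + d) = ∫ x in Ioi (a + d), f x := by
  have hms : ∀ c : ℝ, MeasurableSet (Ioi c) := fun c => measurableSet_Ioi
  rw [← integral_indicator (hms a), ← integral_indicator (hms (a + d)),
    ← integral_add_right_eq_self (μ := volume) ((Ioi (a+d)).indicator f) d]
  congr 1; ext x
  rw [← Set.indicator_comp_right (fun x : ℝ => x + d) (g := f)]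
  congr 1
  ext y
  simp [lt_tsub_iff_right]

lemma gauss_Ioi (m σ a : ℝ) (hσ : 0 < σ) :
    ((gaussianReal m (Real.toNNReal (σ ^ 2))) (Set.Ioi a)).toReal
      = 1 / 2 - 1 / 2 * erf ((a - m) / (σ * Real.sqrt 2)) := by
  set v : NNReal := Real.toNNReal (σ ^ 2) with hv
  have hv0 : v ≠ 0 := by
    simp only [hv, ne_eq, Real.toNNReal_eq_zero, not_le]
    positivity
  have hvc : (v : ℝ) = σ ^ 2 := Real.coe_toNNReal _ (by positivity)
  rw [gaussianReal_apply_eq_integral _ hv0, ENNReal.toReal_ofReal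
    (integral_nonneg fun x => gaussianPDFReal_nonneg _ _ _)]
  have hs2 : (0:ℝ) < Real.sqrt 2 := by positivity
  have hσ2 : (0:ℝ) < σ * Real.sqrt 2 := by positivity
  have hsq : (σ * Real.sqrt 2) ^ 2 = 2 * σ ^ 2 := by
    rw [mul_pow, Real.sq_sqrt (by norm_num : (0:ℝ) ≤ 2)]; ring
  have key : ∀ x : ℝ, gaussianPDFReal m v x
      = (Real.sqrt (2 * π * σ ^ 2))⁻¹ * Real.exp (-((σ * Real.sqrt 2)⁻¹ * (x + -m)) ^ 2) := by
    intro x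
    unfold gaussianPDFReal
    rw [hvc]
    congr 1
    rw [mul_pow, inv_pow, hsq, ← sub_eq_add_neg]
    congr 1
    field_simp
  simp_rw [key]
  rw [integral_const_mul, shift_Ioi (fun y => Real.exp (-((σ * Real.sqrt 2)⁻¹ * y) ^ 2)) a (-m),
    integral_comp_mul_left_Ioi (fun t => Real.exp (-t ^ 2)) _ (inv_pos.mpr hσ2), inv_inv,
    exp_int]
  have hz : (σ * Real.sqrt 2)⁻¹ * (a + -m) = (a - m) / (σ * Real.sqrt 2) := by
    rw [← sub_eq_add_neg]; ring
  rw [hz]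
  have hc : Real.sqrt (2 * π * σ ^ 2) = σ * Real.sqrt 2 * Real.sqrt π := by
    rw [show 2 * π * σ ^ 2 = σ ^ 2 * 2 * π by ring, Real.sqrt_mul (by positivity),
      Real.sqrt_mul (by positivity), Real.sqrt_sq hσ.le, mul_assoc]
  have hπ : (0:ℝ) < Real.sqrt π := Real.sqrt_pos.mpr Real.pi_pos
  rw [hc, smul_eq_mul, erf]
  field_simp


end Aux

/-- `X` is multivariate Gaussian with mean `x0` and covariance `S` iff every linear
functional of `X` is a real Gaussian with the corresponding mean and variance. -/
def IsMultivariateGaussian {Ω : Type*} [MeasurableSpace Ω] (μ : Measure Ω)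
    {n : ℕ} (X : Ω → Fin n → ℝ) (x0 : Fin n → ℝ) (S : Matrix (Fin n) (Fin n) ℝ) : Prop :=
  ∀ w : Fin n → ℝ,
    Measure.map (fun ω => ∑ i, w i * X ω i) μ =
      gaussianReal (∑ i, w i * x0 i) (Real.toNNReal (∑ i, ∑ j, w i * S i j * w j))

theorem stmt_8 {Ω : Type*} [MeasurableSpace Ω] (μ : Measure Ω) [IsProbabilityMeasure μ]
    {n : ℕ} (X : Ω → Fin n → ℝ) (hX : Measurable X)
    (x0 : Fin n → ℝ) (S : Matrix (Fin n) (Fin n) ℝ) (hS : S.PosSemidef)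
    (hGauss : IsMultivariateGaussian μ X x0 S)
    (g : (Fin n → ℝ) → ℝ) (hg : Measurable g)
    (AL AU : Fin n → ℝ) (dL dU : ℝ)
    (hle : ∀ x : Fin n → ℝ, (∑ i, AL i * x i) + dL ≤ g x ∧ g x ≤ (∑ i, AU i * x i) + dU)
    (σL σU : ℝ) (hσL : 0 < σL) (hσU : 0 < σU)
    (hσL2 : σL ^ 2 = ∑ i, ∑ j, AL i * S i j * AL j)
    (hσU2 : σU ^ 2 = ∑ i, ∑ j, AU i * S i j * AU j) (a : ℝ) :
    1 / 2 - 1 / 2 * erf ((a - ((∑ i, AL i * x0 i) + dL)) / (σL * Real.sqrt 2))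
      ≤ (μ {ω | a < g (X ω)}).toReal ∧
    (μ {ω | a < g (X ω)}).toReal
      ≤ 1 / 2 - 1 / 2 * erf ((a - ((∑ i, AU i * x0 i) + dU)) / (σU * Real.sqrt 2)) := by
  have hmL : Measurable fun ω => ∑ i, AL i * X ω i :=
    Finset.measurable_sum _ fun i _ => measurable_const.mul ((measurable_pi_apply i).comp hX)
  have hmU : Measurable fun ω => ∑ i, AU i * X ω i :=
    Finset.measurable_sum _ fun i _ => measurable_const.mul ((measurable_pi_apply i).comp hX)
  have hμL : μ {ω | a - dL < ∑ i, AL i * X ω i}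
      = gaussianReal (∑ i, AL i * x0 i) (Real.toNNReal (σL ^ 2)) (Set.Ioi (a - dL)) := by
    rw [hσL2, ← hGauss AL, Measure.map_apply hmL measurableSet_Ioi]; rfl
  have hμU : μ {ω | a - dU < ∑ i, AU i * X ω i}
      = gaussianReal (∑ i, AU i * x0 i) (Real.toNNReal (σU ^ 2)) (Set.Ioi (a - dU)) := by
    rw [hσU2, ← hGauss AU, Measure.map_apply hmU measurableSet_Ioi]; rfl
  constructor
  · have hsub : {ω | a - dL < ∑ i, AL i * X ω i} ⊆ {ω | a < g (X ω)} := by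
      intro ω h
      have h1 := (hle (X ω)).1
      simp only [Set.mem_setOf_eq] at h ⊢
      linarith
    have := ENNReal.toReal_mono (measure_ne_top μ _) (measure_mono hsub)
    refine le_trans (le_of_eq ?_) this
    rw [hμL, gauss_Ioi _ _ _ hσL]
    congr 2
    ring
  · have hsub : {ω | a < g (X ω)} ⊆ {ω | a - dU < ∑ i, AU i * X ω i} := by
      intro ω h
      have h1 := (hle (X ω)).2
      simp only [Set.mem_setOf_eq] at h ⊢
      linarith
    have := ENNReal.toReal_mono (measure_ne_top μ _) (measure_mono hsub)
    refine le_trans this (le_of_eq ?_)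
    rw [hμU, gauss_Ioi _ _ _ hσU]
    congr 2
    ring
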